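/- arXiv:1402.1395 — 3 statements merged into one kernel-verified Lean document; each statement's English description precedes it below -/
import Mathlib

section
/- Suppose U'(z_c) ≠ 0 and c = U(z_c). Then there exist r > 0 and a holomorphic function η on the disc D(z_c, r) such that η(z_c) = 0, η'(z_c) = 1, and U'(z_c)·η(z)·η'(z)² = U(z) − c for all z ∈ D(z_c, r). -/
open Set Complex Filter
open Topology

noncomputable section

/-- **Existence of the Langer variable** (Section 4.4): if `U` is holomorphic near
`z_c`, `c = U(z_c)` and `U'(z_c) ≠ 0`, then there is a holomorphic function `η` near
`z_c` with `η(z_c) = 0`, `η'(z_c) = 1`, and `U'(z_c)·η·(η')² = U − c`. -/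
theorem langer_variable_exists
    (U : ℂ → ℂ) (zc c : ℂ)
    (hU : ∃ Ω : Set ℂ, IsOpen Ω ∧ zc ∈ Ω ∧ DifferentiableOn ℂ U Ω)
    (hc : c = U zc) (hU' : deriv U zc ≠ 0) :
    ∃ r : ℝ, 0 < r ∧ ∃ η : ℂ → ℂ,
      DifferentiableOn ℂ η (Metric.ball zc r) ∧
      η zc = 0 ∧ deriv η zc = 1 ∧
      ∀ z ∈ Metric.ball zc r,
        deriv U zc * η z * (deriv η z)^2 = U z - c := by
  obtain ⟨Ω, hΩo, hzΩ, hUd⟩ := hU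
  have hUa : AnalyticAt ℂ U zc := hUd.analyticAt (hΩo.mem_nhds hzΩ)
  set d := deriv U zc with hd
  set k : ℂ → ℂ := fun z => dslope U zc z * d⁻¹ with hkdef
  have hka : AnalyticAt ℂ k zc := by
    obtain ⟨p0, hp0⟩ := hUa
    exact (hp0.has_fpower_series_dslope_fslope.analyticAt).mul analyticAt_const
  have hk1 : k zc = 1 := by
    simp only [hkdef, dslope_same]
    exact mul_inv_cancel₀ hU'
  have hfac : ∀ z, U z - c = (z - zc) * (d * k z) := by
    intro z
    have h := sub_smul_dslope U zc z
    rw [smul_eq_mul] at h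
    have hdk : d * k z = dslope U zc z := by
      rw [hkdef]; field_simp
    rw [hdk, hc, h]
  set q : ℂ → ℂ := fun z => Complex.exp ((1/2) * Complex.log (k z)) with hqdef
  have hqa : AnalyticAt ℂ q zc :=
    (analyticAt_const.mul (hka.clog (by rw [hk1]; exact one_mem_slitPlane))).cexp
  have hq1 : q zc = 1 := by
    simp [hqdef, hk1]
  have hq2 : ∀ᶠ z in 𝓝 zc, q z ^ 2 = k z := by
    have hne : ∀ᶠ z in 𝓝 zc, k z ≠ 0 :=
      hka.continuousAt.eventually_ne (by rw [hk1]; exact one_ne_zero)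
    filter_upwards [hne] with z hz
    show Complex.exp ((1/2) * Complex.log (k z)) ^ 2 = k z
    rw [sq, ← Complex.exp_add]
    have h12 : 1/2 * Complex.log (k z) + 1/2 * Complex.log (k z) = Complex.log (k z) := by ring
    rw [h12, Complex.exp_log hz]
  obtain ⟨p, rq, hqs⟩ := hqa
  have hrqpos := hqs.r_pos
  set p2 : FormalMultilinearSeries ℂ ℂ ℂ := fun n => (((n : ℂ) + 3/2)⁻¹) • p n with hp2
  have hne : ∀ n : ℕ, ((n : ℂ) + 3/2) ≠ 0 := by
    intro n
    have h : ((n : ℂ) + 3/2) = (((n : ℝ) + 3/2 : ℝ) : ℂ) := by push_cast; ring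
    rw [h]
    exact_mod_cast (by positivity : ((n : ℝ) + 3/2) ≠ 0)
  have hcoeff : ∀ n, p2.coeff n = ((n : ℂ) + 3/2)⁻¹ * p.coeff n := by
    intro n
    have h : p2 n = ((n : ℂ) + 3/2)⁻¹ • p n := by rw [hp2]
    simp only [FormalMultilinearSeries.coeff, h, ContinuousMultilinearMap.smul_apply,
      smul_eq_mul]
  have hnorm : ∀ n, ‖p2 n‖ ≤ ‖p n‖ := by
    intro n
    have h : p2 n = ((n : ℂ) + 3/2)⁻¹ • p n := by rw [hp2]
    rw [h]
    refine le_trans ((p n).opNorm_smul_le _) ?_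
    have h1 : ‖((n : ℂ) + 3/2)⁻¹‖ ≤ 1 := by
      rw [norm_inv, inv_le_one_iff₀]
      right
      have h2 : ((n : ℂ) + 3/2) = (((n : ℝ) + 3/2 : ℝ) : ℂ) := by push_cast; ring
      rw [h2, Complex.norm_real, Real.norm_eq_abs, _root_.abs_of_nonneg (by positivity)]
      have : (0:ℝ) ≤ n := Nat.cast_nonneg n
      linarith
    calc ‖((n : ℂ) + 3/2)⁻¹‖ * ‖p n‖ ≤ 1 * ‖p n‖ :=
          mul_le_mul_of_nonneg_right h1 (norm_nonneg _)
      _ = ‖p n‖ := one_mul _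
  have hrad : p.radius ≤ p2.radius := by
    refine ENNReal.le_of_forall_nnreal_lt fun r hr => ?_
    obtain ⟨C, hC, hb⟩ := p.norm_mul_pow_le_of_lt_radius hr
    refine p2.le_radius_of_bound C fun n => ?_
    exact le_trans (mul_le_mul_of_nonneg_right (hnorm n) (by positivity)) (hb n)
  set B : ℂ → ℂ := fun z => p2.sum (z - zc) with hBdef
  have hB : HasFPowerSeriesOnBall B p2 zc rq := by
    refine ⟨le_trans hqs.r_le hrad, hrqpos, fun {y} hy => ?_⟩
    have hy' : y ∈ EMetric.ball (0 : ℂ) p2.radius :=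
      EMetric.ball_subset_ball (le_trans hqs.r_le hrad) hy
    simpa [hBdef] using p2.hasSum hy'
  -- key ODE identity : y B'(zc+y) + (3/2) B(zc+y) = q(zc+y)
  have hTval : ∀ y : ℂ, y ∈ EMetric.ball (0 : ℂ) rq →
      y * deriv B (zc + y) + 3/2 * B (zc + y) = q (zc + y) := by
    intro y hy
    have h1 : HasSum (fun n => y ^ n * p2.coeff n) (B (zc + y)) := by
      have := hB.hasSum hy
      simpa [FormalMultilinearSeries.apply_eq_pow_smul_coeff, smul_eq_mul] using this
    have h2 : HasSum (fun n => p2.derivSeries n fun _ => y) (fderiv ℂ B (zc + y)) :=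
      hB.fderiv.hasSum hy
    have h2' := h2.mapL (ContinuousLinearMap.apply ℂ ℂ y)
    have hterm : ∀ n : ℕ, (ContinuousLinearMap.apply ℂ ℂ y) (p2.derivSeries n fun _ => y)
        = ((n : ℂ) + 1) * (y ^ (n+1) * p2.coeff (n+1)) := by
      intro n
      simp only [ContinuousLinearMap.apply_apply]
      rw [p2.derivSeries_apply_diag n y, FormalMultilinearSeries.apply_eq_pow_smul_coeff]
      rw [nsmul_eq_mul, smul_eq_mul]
      push_cast
      ring
    have hval : (ContinuousLinearMap.apply ℂ ℂ y) (fderiv ℂ B (zc + y))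
        = y * deriv B (zc + y) := by
      simp only [ContinuousLinearMap.apply_apply]
      have h := (fderiv ℂ B (zc + y)).map_smul y (1 : ℂ)
      simp only [smul_eq_mul, mul_one] at h
      rw [h, fderiv_apply_one_eq_deriv]
    simp only [hterm, hval] at h2'
    have h3 : HasSum (fun n : ℕ => (n : ℂ) * (y ^ n * p2.coeff n)) (y * deriv B (zc + y)) := by
      have e1 : (fun n : ℕ => (fun m : ℕ => (m : ℂ) * (y ^ m * p2.coeff m)) (n + 1))
          = fun n : ℕ => ((n : ℂ) + 1) * (y ^ (n+1) * p2.coeff (n+1)) := by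
        funext n; push_cast; ring
      have hs := (hasSum_nat_add_iff
        (f := fun n : ℕ => (n : ℂ) * (y ^ n * p2.coeff n)) 1).mp (e1 ▸ h2')
      simpa using hs
    have h4 : HasSum (fun n => (3/2 : ℂ) * (y ^ n * p2.coeff n)) (3/2 * B (zc + y)) :=
      h1.mul_left _
    have h5 := h3.add h4
    have h6 : HasSum (fun n => y ^ n * p.coeff n) (q (zc + y)) := by
      simpa [FormalMultilinearSeries.apply_eq_pow_smul_coeff, smul_eq_mul] using hqs.hasSum hy
    have e2 : (fun n : ℕ => (n : ℂ) * (y ^ n * p2.coeff n) + (3/2 : ℂ) * (y ^ n * p2.coeff n))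
        = fun n : ℕ => y ^ n * p.coeff n := by
      funext n
      rw [hcoeff n]
      have hmi : (n : ℂ) * ((n : ℂ) + 3/2)⁻¹ + 3/2 * ((n : ℂ) + 3/2)⁻¹ = 1 := by
        rw [← add_mul]; exact mul_inv_cancel₀ (hne n)
      linear_combination (y ^ n * p.coeff n) * hmi
    exact (e2 ▸ h5).unique h6
  -- value at the center
  have hB0 : (3/2 : ℂ) * B zc = 1 := by
    have h0 : B zc = p2.coeff 0 := (hB.coeff_zero 1).symm
    rw [h0, hcoeff 0]
    have hp0 : p.coeff 0 = q zc := hqs.coeff_zero 1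
    rw [hp0, hq1]
    norm_num
  -- choose the final radius
  have hev2 : ∀ᶠ z in 𝓝 zc, (3/2 : ℂ) * B z ∈ slitPlane := by
    have hcont : ContinuousAt (fun z => (3/2 : ℂ) * B z) zc :=
      (hB.analyticAt.continuousAt).const_mul _
    exact hcont.eventually_mem (isOpen_slitPlane.mem_nhds (by rw [hB0]; exact one_mem_slitPlane))
  have hev3 : ∀ᶠ z in 𝓝 zc, z ∈ EMetric.ball zc rq := by
    filter_upwards [EMetric.ball_mem_nhds zc hrqpos] with z hz using hz
  obtain ⟨r, hrpos, hrP⟩ := Metric.eventually_nhds_iff.mp ((hq2.and hev2).and hev3)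
  -- the key derivative computation
  have key : ∀ ⦃z : ℂ⦄, dist z zc < r →
      HasDerivAt (fun w => (w - zc) * Complex.exp ((2/3) * Complex.log ((3/2) * B w)))
        (Complex.exp ((2/3) * Complex.log ((3/2) * B z)) * q z / ((3/2) * B z)) z := by
    intro z hz
    obtain ⟨⟨hq2z, hsp⟩, hball⟩ := hrP hz
    have ht0 : (3/2 : ℂ) * B z ≠ 0 := slitPlane_ne_zero hsp
    have hBz : HasDerivAt B (deriv B z) z :=
      (hB.differentiableOn.differentiableAt (EMetric.isOpen_ball.mem_nhds hball)).hasDerivAt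
    have hwdB : (z - zc) * deriv B z = q z - 3/2 * B z := by
      have hy : z - zc ∈ EMetric.ball (0 : ℂ) rq := by
        have hh : edist (z - zc) (0 : ℂ) = edist z zc := by
          rw [edist_dist, edist_dist, dist_eq_norm, dist_eq_norm, sub_zero]
        show edist (z - zc) 0 < rq
        rw [hh]
        exact hball
      have hkey := hTval (z - zc) hy
      have hzz : zc + (z - zc) = z := by ring
      rw [hzz] at hkey
      linear_combination hkey
    have hT' : HasDerivAt (fun w => (3/2 : ℂ) * B w) ((3/2) * deriv B z) z := hBz.const_mul _
    have hlog : HasDerivAt (fun w => Complex.log ((3/2) * B w))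
        (((3/2) * deriv B z) / ((3/2) * B z)) z := hT'.clog hsp
    have hexp : HasDerivAt (fun w => Complex.exp ((2/3) * Complex.log ((3/2) * B w)))
        (Complex.exp ((2/3) * Complex.log ((3/2) * B z)) *
          ((2/3) * (((3/2) * deriv B z) / ((3/2) * B z)))) z :=
      (hlog.const_mul ((2:ℂ)/3)).cexp
    have hid : HasDerivAt (fun w : ℂ => w - zc) 1 z := (hasDerivAt_id z).sub_const zc
    have hmul := hid.mul hexp
    have hBz0 : B z ≠ 0 := by
      intro h0; apply ht0; rw [h0]; ring
    have hq' : q z = (z - zc) * deriv B z + 3/2 * B z := by linear_combination -hwdB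
    refine hmul.congr_deriv ?_
    have calc0 : ∀ (e qv bv dv w : ℂ), bv ≠ 0 → w * dv = qv - 3/2 * bv →
        e * qv / (3/2 * bv) = 1 * e + w * (e * (2/3 * (3/2 * dv / (3/2 * bv)))) := by
      intro e qv bv dv w hb h
      have hqv : qv = w * dv + 3/2 * bv := by linear_combination -h
      rw [hqv]; field_simp; ring
    exact (calc0 _ (q z) (B z) (deriv B z) (z - zc) hBz0 hwdB).symm
  refine ⟨r, hrpos, fun z => (z - zc) * Complex.exp ((2/3) * Complex.log ((3/2) * B z)),
    ?_, ?_, ?_, ?_⟩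
  · intro z hz
    exact ((key (Metric.mem_ball.mp hz)).differentiableAt).differentiableWithinAt
  · show (zc - zc) * Complex.exp ((2/3) * Complex.log ((3/2) * B zc)) = 0
    rw [sub_self, zero_mul]
  · have h := (key (show dist zc zc < r by simp only [dist_self]; exact hrpos)).deriv
    rw [h, hB0, hq1]
    simp
  · intro z hz
    have hz' := Metric.mem_ball.mp hz
    obtain ⟨⟨hq2z, hsp⟩, hball⟩ := hrP hz'
    have ht0 : (3/2 : ℂ) * B z ≠ 0 := slitPlane_ne_zero hsp
    rw [(key hz').deriv, hfac z, ← hq2z]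
    set e := Complex.exp ((2/3) * Complex.log ((3/2) * B z)) with he
    have he3 : e ^ 3 = ((3/2 : ℂ) * B z) ^ 2 := by
      rw [he, ← Complex.exp_nat_mul]
      have h32 : ((3 : ℕ) : ℂ) * ((2/3 : ℂ) * Complex.log ((3/2) * B z))
          = 2 * Complex.log ((3/2) * B z) := by push_cast; ring
      rw [h32, two_mul, Complex.exp_add, Complex.exp_log ht0, sq]
    have h2 : d * ((z - zc) * e) * (e * q z / (3/2 * B z)) ^ 2
        = d * (z - zc) * q z ^ 2 * (e ^ 3 / (3/2 * B z) ^ 2) := by ring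
    rw [h2, he3, div_self (pow_ne_zero 2 ht0), mul_one]
    ring

end
end

section
/- Let η be holomorphic on a disc D(z_c, r) with η(z_c) = 0, η'(z_c) = 1, and U'(z_c)·η(z)·η'(z)² = U(z) − c on D(z_c, r). Then there exist r' ∈ (0, r] and C > 0 such that for all z with |z − z_c| ≤ r': |η(z) − (z − z_c) − (U''(z_c)/(10·U'(z_c)))·(z − z_c)²| ≤ C·|z − z_c|³. In particular η'(z) = 1 + O(|z − z_c|). -/
open Set Complex Filter

open Asymptotics Topology
lemma cubic_bound_aux {g : ℂ → ℂ} {x : ℂ} (hg : AnalyticAt ℂ g x)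
    (h0 : g x = 0) (h1 : deriv g x = 0) (h2 : deriv (deriv g) x = 0) :
    ∃ ε > 0, ∃ C > 0, ∀ z : ℂ, ‖z - x‖ < ε → ‖g z‖ ≤ C * ‖z - x‖ ^ 3 := by
  obtain ⟨p, hp⟩ := hg
  have hps : ∀ n < 3, iteratedDeriv n g x = 0 := by
    intro n hn
    interval_cases n
    · simpa using h0
    · simpa using h1
    · rw [iteratedDeriv_succ, iteratedDeriv_one]; exact h2
  have hpart : ∀ y : ℂ, p.partialSum 3 y = 0 := by
    intro y
    have hz : ∀ n < 3, (p n fun _ => y) = (0 : ℂ) := by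
      intro n hn
      obtain ⟨rr, hrr⟩ := hp
      have hf := hrr.factorial_smul y n
      rw [iteratedFDeriv_apply_eq_iteratedDeriv_mul_prod, hps n hn, smul_zero,
        nsmul_eq_mul] at hf
      have hne : ((n.factorial : ℕ) : ℂ) ≠ 0 := Nat.cast_ne_zero.2 n.factorial_ne_zero
      exact (mul_eq_zero.mp hf).resolve_left hne
    unfold FormalMultilinearSeries.partialSum
    exact Finset.sum_eq_zero fun n hn => hz n (Finset.mem_range.mp hn)
  have hbig := hp.isBigO_sub_partialSum_pow 3
  rw [Asymptotics.isBigO_iff] at hbig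
  obtain ⟨C, hC⟩ := hbig
  rw [Metric.eventually_nhds_iff] at hC
  obtain ⟨ε, hε, hCb⟩ := hC
  refine ⟨ε, hε, max C 1, lt_of_lt_of_le one_pos (le_max_right _ _), fun z hzε => ?_⟩
  have hy : dist (z - x) (0 : ℂ) < ε := by simpa [dist_eq_norm] using hzε
  have := hCb hy
  rw [hpart, sub_zero, add_sub_cancel] at this
  calc ‖g z‖ ≤ C * ‖‖z - x‖ ^ 3‖ := this
    _ = C * ‖z - x‖ ^ 3 := by rw [Real.norm_of_nonneg (by positivity)]
    _ ≤ max C 1 * ‖z - x‖ ^ 3 := by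
        exact mul_le_mul_of_nonneg_right (le_max_left _ _) (by positivity)


noncomputable section

/-- **Taylor expansion of the Langer variable** (estimate (4.16)): if `η` is the Langer
variable at `z_c`, i.e. `η(z_c) = 0`, `η'(z_c) = 1`, `U'(z_c)·η·(η')² = U − c` near
`z_c`, then `η(z) = (z − z_c) + (U''(z_c)/(10·U'(z_c)))(z − z_c)² + O(|z − z_c|³)`;
in particular `η'(z) = 1 + O(|z − z_c|)`. -/
theorem langer_variable_expansion
    (U : ℂ → ℂ) (zc c : ℂ)
    (hU : ∃ Ω : Set ℂ, IsOpen Ω ∧ zc ∈ Ω ∧ DifferentiableOn ℂ U Ω)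
    (hc : c = U zc) (hU' : deriv U zc ≠ 0)
    (r : ℝ) (hr : 0 < r) (η : ℂ → ℂ)
    (hη : DifferentiableOn ℂ η (Metric.ball zc r))
    (hη0 : η zc = 0) (hη'0 : deriv η zc = 1)
    (hLanger : ∀ z ∈ Metric.ball zc r,
      deriv U zc * η z * (deriv η z)^2 = U z - c) :
    ∃ r' : ℝ, 0 < r' ∧ r' ≤ r ∧ ∃ C : ℝ, 0 < C ∧
      ∀ z : ℂ, ‖z - zc‖ ≤ r' →
        ‖η z - (z - zc) - (iteratedDeriv 2 U zc / (10 * deriv U zc)) * (z - zc)^2‖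
            ≤ C * ‖z - zc‖^3 ∧
        ‖deriv η z - 1‖ ≤ C * ‖z - zc‖ := by
  set k := deriv U zc with hk
  set B := Metric.ball zc r with hB
  have hBo : IsOpen B := Metric.isOpen_ball
  have hzc : zc ∈ B := Metric.mem_ball_self hr
  have hBn : B ∈ 𝓝 zc := hBo.mem_nhds hzc
  have hηa : AnalyticOnNhd ℂ η B := hη.analyticOnNhd hBo
  have hη'a : AnalyticOnNhd ℂ (deriv η) B := hηa.deriv
  have hη''a : AnalyticOnNhd ℂ (deriv (deriv η)) B := hη'a.deriv
  -- notation for derivatives of η at interior points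
  have hd1 : ∀ z ∈ B, HasDerivAt η (deriv η z) z :=
    fun z hz => (hηa z hz).differentiableAt.hasDerivAt
  have hd2 : ∀ z ∈ B, HasDerivAt (deriv η) (deriv (deriv η) z) z :=
    fun z hz => (hη'a z hz).differentiableAt.hasDerivAt
  have hd3 : HasDerivAt (deriv (deriv η)) (deriv (deriv (deriv η)) zc) zc :=
    (hη''a zc hzc).differentiableAt.hasDerivAt
  set η2 := deriv (deriv η) zc with hη2
  -- the product function
  set h : ℂ → ℂ := fun z => k * η z * (deriv η z) ^ 2 with hh
  set D1 : ℂ → ℂ := fun z => k * (deriv η z) ^ 3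
      + 2 * k * η z * deriv η z * deriv (deriv η) z with hD1
  have hder : ∀ z ∈ B, HasDerivAt h (D1 z) z := by
    intro z hz
    have H := ((hd1 z hz).const_mul k).mul ((hd2 z hz).pow 2)
    exact H.congr_deriv (by simp only [hD1, Pi.pow_apply]; ring)
  have hEqD1 : deriv h =ᶠ[𝓝 zc] D1 :=
    Filter.eventuallyEq_of_mem hBn fun z hz => (hder z hz).deriv
  -- second derivative of h at zc equals 5 k η2
  have hD1' : HasDerivAt D1 (5 * k * η2) zc := by
    have H1 : HasDerivAt (fun w => k * (deriv η w) ^ 3)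
        (k * (3 * (deriv η zc) ^ 2 * deriv (deriv η) zc)) zc :=
      ((hd2 zc hzc).pow 3).const_mul k
    have H2 : HasDerivAt (fun w => 2 * k * η w * deriv η w * deriv (deriv η) w)
        ((((2 * k) * deriv η zc) * deriv η zc + (2 * k * η zc) * deriv (deriv η) zc)
          * deriv (deriv η) zc
          + (2 * k * η zc * deriv η zc) * deriv (deriv (deriv η)) zc) zc :=
      (((hd1 zc hzc).const_mul (2 * k)).mul (hd2 zc hzc)).mul hd3
    have := H1.add H2
    exact this.congr_deriv (by rw [hη0, hη'0, hη2]; ring)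
  have hhU : h =ᶠ[𝓝 zc] fun z => U z - c :=
    Filter.eventuallyEq_of_mem hBn fun z hz => hLanger z hz
  have key : iteratedDeriv 2 U zc = 5 * k * η2 := by
    have e1 : deriv (deriv h) zc = 5 * k * η2 := by
      rw [hEqD1.deriv_eq]; exact hD1'.deriv
    have e2 : deriv h =ᶠ[𝓝 zc] deriv U := by
      refine hhU.deriv.trans (Filter.EventuallyEq.of_eq ?_)
      funext z
      exact deriv_sub_const c
    have e3 : deriv (deriv h) zc = deriv (deriv U) zc := e2.deriv_eq
    rw [iteratedDeriv_succ, iteratedDeriv_one, ← e3, e1]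
  -- the coefficient
  set a : ℂ := iteratedDeriv 2 U zc / (10 * k) with ha
  have ha2 : 2 * a = η2 := by
    rw [ha, key]
    field_simp
    ring
  -- the remainder function
  set g : ℂ → ℂ := fun z => η z - (z - zc) - a * (z - zc) ^ 2 with hg
  have hga : AnalyticAt ℂ g zc := by
    apply AnalyticAt.sub
    apply AnalyticAt.sub (hηa zc hzc)
    · exact analyticAt_id.sub analyticAt_const
    · exact analyticAt_const.mul ((analyticAt_id.sub analyticAt_const).pow 2)
  have hg0 : g zc = 0 := by simp [hg, hη0]
  have hgder : ∀ z ∈ B, HasDerivAt g (deriv η z - 1 - 2 * a * (z - zc)) z := by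
    intro z hz
    have Hp : HasDerivAt (fun w => (w - zc) + a * (w - zc) ^ 2)
        (1 + a * (2 * (z - zc))) z := by
      have h1 : HasDerivAt (fun w : ℂ => w - zc) 1 z := (hasDerivAt_id z).sub_const zc
      have h2 : HasDerivAt (fun w : ℂ => a * (w - zc) ^ 2) (a * (2 * (z - zc) ^ 1 * 1)) z :=
        (h1.pow 2).const_mul a
      exact (h1.add h2).congr_deriv (by ring)
    have := (hd1 z hz).sub Hp
    have e : g = η - fun w => (w - zc) + a * (w - zc) ^ 2 := by
      funext w; simp only [hg, Pi.sub_apply]; ring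
    rw [e]
    exact this.congr_deriv (by ring)
  have hg1 : deriv g zc = 0 := by
    have := (hgder zc hzc).deriv
    rw [this, hη'0]; ring
  have hg2 : deriv (deriv g) zc = 0 := by
    have hEq : deriv g =ᶠ[𝓝 zc] fun z => deriv η z - 1 - 2 * a * (z - zc) :=
      Filter.eventuallyEq_of_mem hBn fun z hz => (hgder z hz).deriv
    have Hd : HasDerivAt (fun z => deriv η z - 1 - 2 * a * (z - zc))
        (deriv (deriv η) zc - 2 * a * 1) zc := by
      have h1 : HasDerivAt (fun w : ℂ => 2 * a * (w - zc)) (2 * a * 1) zc :=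
        ((hasDerivAt_id zc).sub_const zc).const_mul (2 * a)
      exact (((hd2 zc hzc).sub_const 1).sub h1)
    rw [hEq.deriv_eq, Hd.deriv, ← hη2, ← ha2]
    ring
  obtain ⟨ε₁, hε₁, C₁, hC₁, hcub⟩ := cubic_bound_aux hga hg0 hg1 hg2
  -- linear bound for deriv η - 1
  have hlin : ∃ ε₂ > (0:ℝ), ∃ C₂ : ℝ, ∀ z : ℂ, ‖z - zc‖ < ε₂ →
      ‖deriv η z - 1‖ ≤ C₂ * ‖z - zc‖ := by
    have hd := (hη'a zc hzc).differentiableAt.isBigO_sub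
    rw [hη'0, Asymptotics.isBigO_iff] at hd
    obtain ⟨C₂, hC₂⟩ := hd
    rw [Metric.eventually_nhds_iff] at hC₂
    obtain ⟨ε₂, hε₂, hb⟩ := hC₂
    exact ⟨ε₂, hε₂, C₂, fun z hz => by
      simpa using hb (show dist z zc < ε₂ by rwa [dist_eq_norm])⟩
  obtain ⟨ε₂, hε₂, C₂, hlinb⟩ := hlin
  refine ⟨min r (min ε₁ ε₂ / 2), by positivity, min_le_left _ _,
    max C₁ C₂ + 1, by positivity, fun z hz => ?_⟩
  have hz1 : ‖z - zc‖ < ε₁ := by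
    calc ‖z - zc‖ ≤ min ε₁ ε₂ / 2 := le_trans hz (min_le_right _ _)
      _ < ε₁ := by have := min_le_left ε₁ ε₂; linarith [lt_min hε₁ hε₂]
  have hz2 : ‖z - zc‖ < ε₂ := by
    calc ‖z - zc‖ ≤ min ε₁ ε₂ / 2 := le_trans hz (min_le_right _ _)
      _ < ε₂ := by have := min_le_right ε₁ ε₂; linarith [lt_min hε₁ hε₂]
  constructor
  · calc ‖η z - (z - zc) - (iteratedDeriv 2 U zc / (10 * deriv U zc)) * (z - zc)^2‖
        = ‖g z‖ := by rw [hg, ha, hk]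
      _ ≤ C₁ * ‖z - zc‖ ^ 3 := hcub z hz1
      _ ≤ (max C₁ C₂ + 1) * ‖z - zc‖ ^ 3 := by
          apply mul_le_mul_of_nonneg_right _ (by positivity)
          calc C₁ ≤ max C₁ C₂ := le_max_left _ _
            _ ≤ max C₁ C₂ + 1 := by linarith
  · calc ‖deriv η z - 1‖ ≤ C₂ * ‖z - zc‖ := hlinb z hz2
      _ ≤ (max C₁ C₂ + 1) * ‖z - zc‖ := by
          apply mul_le_mul_of_nonneg_right _ (by positivity)
          calc C₂ ≤ max C₁ C₂ := le_max_right _ _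
            _ ≤ max C₁ C₂ + 1 := by linarith


end
end

section
/- Let η be holomorphic on an open set Ω containing [0,1], with η' nowhere vanishing on Ω and U'(z_c)·η(z)·η'(z)² = U(z) − c on Ω. Let Φ be holomorphic on an open set containing η([0,1]) and f a function on that set with ε·Φ''(ζ) − U'(z_c)·ζ·Φ(ζ) = f(ζ) for all ζ there. Let w(z) := η'(z)^{-1/2}·Φ(η(z)) (a fixed holomorphic branch of the square root) and let φ : [0,1] → ℂ be any C⁴ function with φ''(z) = w(z) on [0,1]. Then for all z ∈ [0,1]: ε·φ''''(z) − (U(z) − c)·φ''(z) = η'(z)^{3/2}·f(η(z)) + ε·(d²/dz²)[η'(z)^{-1/2}]·Φ(η(z)). -/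
open Set Complex Filter Topology

noncomputable section

/-- The real segment `[0,1]` viewed inside `ℂ`. -/
def segment01 : Set ℂ := Complex.ofReal '' Set.Icc (0:ℝ) 1

/-- Second derivative of the real restriction of a complex-differentiable function. -/
lemma real_restrict_deriv2 (h : ℂ → ℂ) (O : Set ℂ)
    (hd : ∀ z ∈ O, DifferentiableAt ℂ h z)
    (hd' : ∀ z ∈ O, DifferentiableAt ℂ (deriv h) z)
    (hsub : ∀ x ∈ Set.Icc (0:ℝ) 1, (x:ℂ) ∈ O)
    {x : ℝ} (hx : x ∈ Set.Icc (0:ℝ) 1) :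
    iteratedDerivWithin 2 (fun t : ℝ => h t) (Set.Icc (0:ℝ) 1) x = iteratedDeriv 2 h x := by
  have hu : UniqueDiffOn ℝ (Set.Icc (0:ℝ) 1) := uniqueDiffOn_Icc_zero_one
  have step1 : ∀ y ∈ Set.Icc (0:ℝ) 1,
      derivWithin (fun t : ℝ => h t) (Set.Icc (0:ℝ) 1) y = deriv h y := fun y hy =>
    (((hd _ (hsub y hy)).hasDerivAt).comp_ofReal).hasDerivWithinAt.derivWithin (hu y hy)
  have h21 : (2:ℕ) = 1 + 1 := rfl
  rw [h21, iteratedDerivWithin_succ]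
  have congr1 : Set.EqOn (iteratedDerivWithin 1 (fun t : ℝ => h t) (Set.Icc (0:ℝ) 1))
      (fun y : ℝ => deriv h y) (Set.Icc (0:ℝ) 1) := fun y hy => by
    rw [iteratedDerivWithin_one]; exact step1 y hy
  rw [derivWithin_congr congr1 (congr1 hx)]
  have h2 : HasDerivAt (fun y : ℝ => deriv h y) (deriv (deriv h) x) x :=
    ((hd' _ (hsub x hx)).hasDerivAt).comp_ofReal
  rw [h2.hasDerivWithinAt.derivWithin (hu x hx)]
  rw [iteratedDeriv_succ, iteratedDeriv_one]

/-- **The Langer transformation** (Lemma 4.2): if `η` is the Langer variable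
(`U'(z_c)·η·(η')² = U − c`, `η'` nonvanishing), `g` is a holomorphic branch of
`(η')^{1/2}`, `Φ` solves `ε·Φ'' − U'(z_c)·ζ·Φ = f`, and `φ` is `C⁴` on `[0,1]` with
`φ'' = (η')^{-1/2}·Φ∘η`, then
`ε·φ'''' − (U − c)·φ'' = (η')^{3/2}·f∘η + ε·((η')^{-1/2})''·Φ∘η` on `[0,1]`. -/
theorem langer_transformation
    (U : ℂ → ℂ) (zc c : ℂ) (ε : ℂ)
    (hc : c = U zc) (hU' : deriv U zc ≠ 0)
    (Ω : Set ℂ) (hΩ : IsOpen Ω) (hseg : segment01 ⊆ Ω)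
    (hU : DifferentiableOn ℂ U Ω)
    (η : ℂ → ℂ) (hη : DifferentiableOn ℂ η Ω)
    (hη' : ∀ z ∈ Ω, deriv η z ≠ 0)
    (hLanger : ∀ z ∈ Ω, deriv U zc * η z * (deriv η z)^2 = U z - c)
    (V : Set ℂ) (hV : IsOpen V)
    (hηV : (fun x : ℝ => η (x:ℂ)) '' Set.Icc (0:ℝ) 1 ⊆ V)
    (Φ f : ℂ → ℂ) (hΦ : DifferentiableOn ℂ Φ V)
    (hf : ∀ ζ ∈ V, ε * iteratedDeriv 2 Φ ζ - deriv U zc * ζ * Φ ζ = f ζ)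
    (g : ℂ → ℂ) (hg : DifferentiableOn ℂ g Ω)
    (hg2 : ∀ z ∈ Ω, g z ^ 2 = deriv η z)
    (φ : ℝ → ℂ) (hφ : ContDiffOn ℝ 4 φ (Set.Icc (0:ℝ) 1))
    (hφ'' : ∀ z ∈ Set.Icc (0:ℝ) 1,
      iteratedDerivWithin 2 φ (Set.Icc (0:ℝ) 1) z = Φ (η (z:ℂ)) / g (z:ℂ)) :
    ∀ z ∈ Set.Icc (0:ℝ) 1,
      ε * iteratedDerivWithin 4 φ (Set.Icc (0:ℝ) 1) z
          - (U (z:ℂ) - c) * iteratedDerivWithin 2 φ (Set.Icc (0:ℝ) 1) z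
        = g (z:ℂ) ^ 3 * f (η (z:ℂ))
          + ε * iteratedDeriv 2 (fun w : ℂ => (g w)⁻¹) (z:ℂ) * Φ (η (z:ℂ)) := by
  classical
  set s : Set ℝ := Set.Icc (0:ℝ) 1 with hs
  set O : Set ℂ := Ω ∩ η ⁻¹' V with hOdef
  have hO : IsOpen O := hη.continuousOn.isOpen_inter_preimage hΩ hV
  have hsubO : ∀ x ∈ s, (x:ℂ) ∈ O := fun x hx =>
    ⟨hseg ⟨x, hx, rfl⟩, hηV ⟨x, hx, rfl⟩⟩
  -- analyticity
  have hηA : AnalyticOnNhd ℂ η Ω := hη.analyticOnNhd hΩ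
  have hgA : AnalyticOnNhd ℂ g Ω := hg.analyticOnNhd hΩ
  have hΦA : AnalyticOnNhd ℂ Φ V := hΦ.analyticOnNhd hV
  have hηd : ∀ z ∈ Ω, DifferentiableAt ℂ η z := fun z hz => (hηA z hz).differentiableAt
  have hη'd : ∀ z ∈ Ω, DifferentiableAt ℂ (deriv η) z := fun z hz =>
    (hηA.deriv z hz).differentiableAt
  have hgd : ∀ z ∈ Ω, DifferentiableAt ℂ g z := fun z hz => (hgA z hz).differentiableAt
  have hg'd : ∀ z ∈ Ω, DifferentiableAt ℂ (deriv g) z := fun z hz =>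
    (hgA.deriv z hz).differentiableAt
  have hΦd : ∀ ζ ∈ V, DifferentiableAt ℂ Φ ζ := fun ζ hζ => (hΦA ζ hζ).differentiableAt
  have hΦ'd : ∀ ζ ∈ V, DifferentiableAt ℂ (deriv Φ) ζ := fun ζ hζ =>
    (hΦA.deriv ζ hζ).differentiableAt
  have hgne : ∀ z ∈ Ω, g z ≠ 0 := by
    intro z hz h0
    exact hη' z hz (by rw [← hg2 z hz, h0]; ring)
  -- the main complex functions
  set A : ℂ → ℂ := fun z => Φ (η z) with hAdef
  set B : ℂ → ℂ := fun w : ℂ => (g w)⁻¹ with hBdef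
  set W : ℂ → ℂ := fun z => Φ (η z) / g z with hWdef
  have hWeq : W = fun z => A z * B z := funext fun z => div_eq_mul_inv _ _
  have hAd : ∀ z ∈ O, DifferentiableAt ℂ A z := fun z hz =>
    (hΦd _ hz.2).comp z (hηd _ hz.1)
  have hderivA : ∀ z ∈ O, deriv A z = deriv Φ (η z) * deriv η z := fun z hz =>
    deriv_comp z (hΦd _ hz.2) (hηd _ hz.1)
  have hBd : ∀ z ∈ O, DifferentiableAt ℂ B z := fun z hz =>
    (hgd _ hz.1).inv (hgne _ hz.1)
  have hderivB : ∀ z ∈ O, deriv B z = -deriv g z / g z ^ 2 := fun z hz =>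
    deriv_inv'' (hgd _ hz.1) (hgne _ hz.1)
  have hWd : ∀ z ∈ O, DifferentiableAt ℂ W z := fun z hz => by
    rw [hWeq]; exact (hAd z hz).mul (hBd z hz)
  have hderivW : ∀ z ∈ O, deriv W z = deriv A z * B z + A z * deriv B z := fun z hz => by
    rw [hWeq]; exact deriv_mul (hAd z hz) (hBd z hz)
  -- second derivative facts, pointwise on O
  have hA'd : ∀ z ∈ O, DifferentiableAt ℂ (deriv A) z := by
    intro z hz
    have hAev : deriv A =ᶠ[𝓝 z] fun w => deriv Φ (η w) * deriv η w :=
      eventually_of_mem (hO.mem_nhds hz) hderivA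
    have hnice : DifferentiableAt ℂ (fun w => deriv Φ (η w) * deriv η w) z :=
      ((hΦ'd _ hz.2).comp z (hηd _ hz.1)).mul (hη'd _ hz.1)
    exact hnice.congr_of_eventuallyEq hAev
  have hderivA2 : ∀ z ∈ O, deriv (deriv A) z
      = iteratedDeriv 2 Φ (η z) * deriv η z * deriv η z
        + deriv Φ (η z) * (2 * g z * deriv g z) := by
    intro z hz
    have hAev : deriv A =ᶠ[𝓝 z] fun w => deriv Φ (η w) * deriv η w :=
      eventually_of_mem (hO.mem_nhds hz) hderivA
    rw [hAev.deriv_eq]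
    have hcomp : DifferentiableAt ℂ (fun w => deriv Φ (η w)) z :=
      (hΦ'd _ hz.2).comp z (hηd _ hz.1)
    rw [deriv_fun_mul hcomp (hη'd _ hz.1)]
    have h1 : deriv (fun w => deriv Φ (η w)) z = deriv (deriv Φ) (η z) * deriv η z :=
      deriv_comp z (hΦ'd _ hz.2) (hηd _ hz.1)
    have h2 : deriv (deriv η) z = 2 * g z * deriv g z := by
      have hη2ev : deriv η =ᶠ[𝓝 z] fun w => g w ^ 2 :=
        eventually_of_mem (hΩ.mem_nhds hz.1) (fun w hw => (hg2 w hw).symm)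
      rw [hη2ev.deriv_eq, deriv_fun_pow (hgd _ hz.1) 2]
      push_cast; ring
    have h3 : iteratedDeriv 2 Φ = deriv (deriv Φ) := by
      rw [show (2:ℕ) = 1 + 1 from rfl, iteratedDeriv_succ, iteratedDeriv_one]
    rw [h1, h2, h3]
  have hB'd : ∀ z ∈ O, DifferentiableAt ℂ (deriv B) z := by
    intro z hz
    have hBev : deriv B =ᶠ[𝓝 z] fun w => -deriv g w / g w ^ 2 :=
      eventually_of_mem (hO.mem_nhds hz) hderivB
    have hnice : DifferentiableAt ℂ (fun w => -deriv g w / g w ^ 2) z :=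
      (hg'd _ hz.1).neg.div ((hgd _ hz.1).pow 2) (pow_ne_zero 2 (hgne _ hz.1))
    exact hnice.congr_of_eventuallyEq hBev
  have hW'd : ∀ z ∈ O, DifferentiableAt ℂ (deriv W) z := by
    intro z hz
    have hWev : deriv W =ᶠ[𝓝 z] fun w => deriv A w * B w + A w * deriv B w := by
      filter_upwards [hO.mem_nhds hz] with w hw using hderivW w hw
    have hnice : DifferentiableAt ℂ (fun w => deriv A w * B w + A w * deriv B w) z := by
      have hA'O : DifferentiableOn ℂ (deriv A) O := fun w hw => (hA'd w hw).differentiableWithinAt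
      have hB'O : DifferentiableOn ℂ (deriv B) O := fun w hw => (hB'd w hw).differentiableWithinAt
      exact ((hA'd z hz).mul (hBd z hz)).add ((hAd z hz).mul (hB'd z hz))
    exact hnice.congr_of_eventuallyEq hWev
  -- the key second-derivative formula
  have hkey : ∀ z ∈ O, iteratedDeriv 2 W z
      = iteratedDeriv 2 Φ (η z) * g z ^ 3 + Φ (η z) * iteratedDeriv 2 B z := by
    intro z hz
    have hWev : deriv W =ᶠ[𝓝 z] fun w => deriv A w * B w + A w * deriv B w := by
      filter_upwards [hO.mem_nhds hz] with w hw using hderivW w hw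
    have h2B : iteratedDeriv 2 B = deriv (deriv B) := by
      rw [show (2:ℕ) = 1 + 1 from rfl, iteratedDeriv_succ, iteratedDeriv_one]
    have h2W : iteratedDeriv 2 W = deriv (deriv W) := by
      rw [show (2:ℕ) = 1 + 1 from rfl, iteratedDeriv_succ, iteratedDeriv_one]
    rw [h2W, hWev.deriv_eq]
    rw [deriv_fun_add (f := fun w => deriv A w * B w) (g := fun w => A w * deriv B w) ((hA'd z hz).mul (hBd z hz)) ((hAd z hz).mul (hB'd z hz)),
      deriv_fun_mul (hA'd z hz) (hBd z hz), deriv_fun_mul (hAd z hz) (hB'd z hz)]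
    rw [hderivA2 z hz, hderivA z hz, hderivB z hz, ← h2B]
    have hgz : g z ≠ 0 := hgne _ hz.1
    have hη2 : deriv η z = g z ^ 2 := (hg2 _ hz.1).symm
    simp only [hAdef, hBdef, hη2]
    field_simp
    ring
  -- pass from the real derivatives to the complex ones
  intro x hx
  have hWval : ∀ y ∈ s, iteratedDerivWithin 2 φ s y = W (y:ℂ) := fun y hy => hφ'' y hy
  have hu : UniqueDiffOn ℝ s := uniqueDiffOn_Icc_zero_one
  have hstep : iteratedDerivWithin 4 φ s x
      = iteratedDerivWithin 2 (fun t : ℝ => W t) s x := by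
    have e1 : Set.EqOn (iteratedDerivWithin 3 φ s)
        (iteratedDerivWithin 1 (fun t : ℝ => W t) s) s := by
      intro y hy
      rw [show (3:ℕ) = 2 + 1 from rfl, iteratedDerivWithin_succ,
        iteratedDerivWithin_one]
      exact derivWithin_congr hWval (hWval y hy)
    rw [show (4:ℕ) = 3 + 1 from rfl, iteratedDerivWithin_succ (n := 3),
      show (2:ℕ) = 1 + 1 from rfl, iteratedDerivWithin_succ (n := 1)]
    exact derivWithin_congr e1 (e1 hx)
  have hreal : iteratedDerivWithin 2 (fun t : ℝ => W t) s x = iteratedDeriv 2 W x :=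
    real_restrict_deriv2 W O hWd hW'd hsubO hx
  have hxO : (x:ℂ) ∈ O := hsubO x hx
  have hfx := hf (η (x:ℂ)) hxO.2
  have hgx : g (x:ℂ) ≠ 0 := hgne _ hxO.1
  have hUc : U (x:ℂ) - c = deriv U zc * η (x:ℂ) * (g (x:ℂ) ^ 2) ^ 2 := by
    rw [← hLanger _ hxO.1, hg2 _ hxO.1]
  rw [hstep, hreal, hkey _ hxO, hφ'' x hx, hUc, ← hfx]
  field_simp
  ring

end
end
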